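/- Assume the data process (Y_i) satisfies the Chazottes–Gouëzel concentration property with constants C > 0 and Lipschitz constant L > 0 of the observable g, and let μ = g_*ν. Then for every n ∈ ℕ and all ξ, ξ' ∈ H^D, the random variable (L̂^μ(ξ,n) − L^μ(ξ)) − (L̂^μ(ξ',n) − L^μ(ξ')) is sub-Gaussian with variance proxy at most (C L²/n)·(C₁/B² + √d/B)²·‖ξ − ξ'‖²_{C¹}; that is, writing W for this random variable, E[exp(τ(W − E W))] ≤ exp(τ²σ²/2) for all τ ∈ ℝ with σ² = (C L²/n)(C₁/B² + √d/B)² ‖ξ − ξ'‖²_{C¹}. -/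

import Mathlib

open MeasureTheory Real Set
open scoped ENNReal NNReal

noncomputable section

abbrev Euc (d : ℕ) := EuclideanSpace ℝ (Fin d)

def cube (d : ℕ) : Set (Euc d) := {x | ∀ i, x i ∈ Set.Icc (0:ℝ) 1}

def HolderNormLE {E F : Type*} [NormedAddCommGroup E] [NormedSpace ℝ E]
    [NormedAddCommGroup F] [NormedSpace ℝ F] (k : ℕ) (α Kb : ℝ) (f : E → F) (A : Set E) :
    Prop :=
  ContDiffOn ℝ k f A ∧
  ∃ a b : ℝ, 0 ≤ a ∧ 0 ≤ b ∧ a + b ≤ Kb ∧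
    (∀ i ≤ k, ∀ x ∈ A, ‖iteratedFDerivWithin ℝ i f A x‖ ≤ a) ∧
    (∀ x ∈ A, ∀ y ∈ A,
      ‖iteratedFDerivWithin ℝ k f A x - iteratedFDerivWithin ℝ k f A y‖ ≤ b * ‖x - y‖ ^ α)

/-- The discriminator hypothesis space `H^D`. -/
def memHD (d k : ℕ) (α B C₁ C₂ : ℝ) (ξ : Euc d → ℝ) : Prop :=
  (∀ y ∈ cube d, ξ y ∈ Set.Ioo (0:ℝ) 1) ∧
  (∀ y ∈ cube d, B ≤ ξ y ∧ ξ y ≤ 1 - B) ∧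
  (∀ y ∈ cube d, ‖fderivWithin ℝ ξ (cube d) y‖ ≤ C₁) ∧
  HolderNormLE (k - 1) α C₂ ξ (cube d)

/-- The `C¹`-norm on a set `A`. -/
def C1normOn {d : ℕ} {F : Type*} [NormedAddCommGroup F] [NormedSpace ℝ F]
    (f : Euc d → F) (A : Set (Euc d)) : ℝ :=
  max (⨆ x : A, ‖f x.1‖)
    (⨆ i : Fin d, ⨆ x : A, ‖fderivWithin ℝ f A x.1 (EuclideanSpace.single i 1)‖)

/-- `L^μ(ξ)`. -/
def Lmu {d : ℕ} (μ : Measure (Euc d)) (ξ : Euc d → ℝ) : ℝ := ∫ y, Real.log (ξ y) ∂μ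

/-- `L̂^μ(ξ,n)` for a realization `Y` of the data. -/
def empLmu {d : ℕ} (Y : ℕ → Euc d) (n : ℕ) (ξ : Euc d → ℝ) : ℝ :=
  (n : ℝ)⁻¹ * ∑ i ∈ Finset.range n, Real.log (ξ (Y i))


set_option maxHeartbeats 1000000


lemma cube_apply (d : ℕ) (a b : ℝ) (x y : Euc d) (i : Fin d) :
    (a • x + b • y) i = a * x i + b * y i := by
  simp [PiLp.add_apply, PiLp.smul_apply, smul_eq_mul]

lemma cube_convex (d : ℕ) : Convex ℝ (cube d) := by
  intro x hx y hy a b ha hb hab i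
  obtain ⟨hx0, hx1⟩ := hx i; obtain ⟨hy0, hy1⟩ := hy i
  rw [Set.mem_Icc, cube_apply]
  constructor
  · positivity
  · calc a * x i + b * y i ≤ a * 1 + b * 1 := by
          gcongr
       _ = 1 := by linarith
  
lemma cube_uniqueDiffOn (d : ℕ) : UniqueDiffOn ℝ (cube d) := by
  apply uniqueDiffOn_convex (cube_convex d)
  refine ⟨(WithLp.toLp 2 (fun _ => (1:ℝ)/2) : Euc d), ?_⟩
  have hU : IsOpen {x : Euc d | ∀ i, x i ∈ Set.Ioo (0:ℝ) 1} := by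
    have : {x : Euc d | ∀ i, x i ∈ Set.Ioo (0:ℝ) 1}
        = ⋂ i, (fun x : Euc d => x i) ⁻¹' Set.Ioo (0:ℝ) 1 := by
      ext x; simp
    rw [this]
    exact isOpen_iInter_of_finite fun i =>
      isOpen_Ioo.preimage (EuclideanSpace.proj i).continuous
  apply interior_maximal _ hU
  · intro i; norm_num
  · intro x hx i; exact ⟨(hx i).1.le, (hx i).2.le⟩


lemma opNorm_le_sqrt_card {d : ℕ} (D : Euc d →L[ℝ] ℝ) {m : ℝ} (hm : 0 ≤ m)
    (h : ∀ i, ‖D (EuclideanSpace.single i (1:ℝ))‖ ≤ m) : ‖D‖ ≤ Real.sqrt d * m := by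
  apply ContinuousLinearMap.opNorm_le_bound _ (by positivity)
  intro x
  have hx : x = ∑ i, x i • EuclideanSpace.single i (1:ℝ) := by
    have := (EuclideanSpace.basisFun (Fin d) ℝ).sum_repr x
    simpa [EuclideanSpace.basisFun_repr, EuclideanSpace.basisFun_apply] using this.symm
  have hDx : D x = ∑ i, x i * D (EuclideanSpace.single i (1:ℝ)) := by
    conv_lhs => rw [hx]
    simp [map_sum]
  have hsum : ∑ i, |x i| ≤ Real.sqrt d * ‖x‖ := by
    have h1 : (∑ i, |x i|) ^ 2 ≤ (d : ℝ) * ∑ i, |x i| ^ 2 := by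
      have := sq_sum_le_card_mul_sum_sq (s := Finset.univ) (f := fun i => |x i|)
      simpa using this
    have h2 : ‖x‖ = Real.sqrt (∑ i, |x i| ^ 2) := by
      rw [EuclideanSpace.norm_eq]; simp [Real.norm_eq_abs]
    have h3 : (0:ℝ) ≤ ∑ i, |x i| := Finset.sum_nonneg fun i _ => abs_nonneg _
    calc ∑ i, |x i| = Real.sqrt ((∑ i, |x i|)^2) := by rw [Real.sqrt_sq h3]
      _ ≤ Real.sqrt ((d:ℝ) * ∑ i, |x i| ^ 2) := Real.sqrt_le_sqrt h1
      _ = Real.sqrt d * ‖x‖ := by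
          rw [Real.sqrt_mul (by positivity), h2]
  calc ‖D x‖ = |∑ i, x i * D (EuclideanSpace.single i (1:ℝ))| := by
        rw [hDx]; rfl
    _ ≤ ∑ i, |x i * D (EuclideanSpace.single i (1:ℝ))| := Finset.abs_sum_le_sum_abs _ _
    _ ≤ ∑ i, |x i| * m := by
        apply Finset.sum_le_sum; intro i _
        rw [abs_mul]
        exact mul_le_mul_of_nonneg_left (h i) (abs_nonneg _)
    _ = (∑ i, |x i|) * m := by rw [Finset.sum_mul]
    _ ≤ (Real.sqrt d * ‖x‖) * m := by gcongr
    _ = Real.sqrt d * m * ‖x‖ := by ring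

lemma logdiff_lip {d k : ℕ} (hk : 2 ≤ k) {α B C₁ C₂ : ℝ}
    (hB : B ∈ Set.Ioo (0:ℝ) (1/2)) (hC₁ : 0 < C₁)
    {ξ ξ' : Euc d → ℝ} (hξ : memHD d k α B C₁ C₂ ξ) (hξ' : memHD d k α B C₁ C₂ ξ') :
    ∀ u ∈ cube d, ∀ v ∈ cube d,
      ‖(Real.log (ξ u) - Real.log (ξ' u)) - (Real.log (ξ v) - Real.log (ξ' v))‖ ≤
        ((C₁ / B ^ 2 + Real.sqrt d / B) * C1normOn (fun y => ξ y - ξ' y) (cube d)) * ‖u - v‖ := by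
  intro u hu v hv
  have hB0 : (0:ℝ) < B := hB.1
  set A := cube d with hA
  have hU : UniqueDiffOn ℝ A := cube_uniqueDiffOn d
  have hone : (1 : WithTop ℕ∞) ≤ ((k - 1 : ℕ) : WithTop ℕ∞) := by
    have : 1 ≤ k - 1 := by omega
    exact_mod_cast this
  have hdiff : DifferentiableOn ℝ ξ A := hξ.2.2.2.1.differentiableOn (by exact_mod_cast (show k - 1 ≠ 0 by omega))
  have hdiff' : DifferentiableOn ℝ ξ' A := hξ'.2.2.2.1.differentiableOn (by exact_mod_cast (show k - 1 ≠ 0 by omega))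
  set N := C1normOn (fun y => ξ y - ξ' y) (cube d) with hNdef
  set Dξ := fun y => fderivWithin ℝ ξ A y with hDξ
  set Dξ' := fun y => fderivWithin ℝ ξ' A y with hDξ'
  have hpos : ∀ y ∈ A, B ≤ ξ y ∧ ξ y ≤ 1 - B := hξ.2.1
  have hpos' : ∀ y ∈ A, B ≤ ξ' y ∧ ξ' y ≤ 1 - B := hξ'.2.1
  -- derivative of the log-difference
  set f' : Euc d → (Euc d →L[ℝ] ℝ) :=
    fun y => (ξ y)⁻¹ • Dξ y - (ξ' y)⁻¹ • Dξ' y with hf'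
  have hderiv : ∀ y ∈ A, HasFDerivWithinAt
      (fun z => Real.log (ξ z) - Real.log (ξ' z)) (f' y) A y := by
    intro y hy
    have hne : ξ y ≠ 0 := ne_of_gt (lt_of_lt_of_le hB0 (hpos y hy).1)
    have hne' : ξ' y ≠ 0 := ne_of_gt (lt_of_lt_of_le hB0 (hpos' y hy).1)
    have h1 := (Real.hasDerivAt_log hne).comp_hasFDerivWithinAt y
      (hdiff y hy).hasFDerivWithinAt
    have h2 := (Real.hasDerivAt_log hne').comp_hasFDerivWithinAt y
      (hdiff' y hy).hasFDerivWithinAt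
    exact h1.sub h2
  -- bounds coming from the C¹ norm
  have hN0 : 0 ≤ N := by
    rw [hNdef]
    exact le_trans (Real.iSup_nonneg fun x => norm_nonneg _) (le_max_left _ _)
  have hsubD : ∀ y ∈ A, fderivWithin ℝ (fun z => ξ z - ξ' z) A y = Dξ y - Dξ' y := by
    intro y hy
    exact fderivWithin_sub (hU y hy) (hdiff y hy) (hdiff' y hy)
  have hN1 : ∀ y ∈ A, |ξ y - ξ' y| ≤ N := by
    intro y hy
    have hb : BddAbove (Set.range fun x : A => ‖(fun z => ξ z - ξ' z) x.1‖) := by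
      refine ⟨2, ?_⟩
      rintro _ ⟨x, rfl⟩
      have h1 := hξ.1 x.1 x.2; have h2 := hξ'.1 x.1 x.2
      simp only [Real.norm_eq_abs]
      rw [abs_sub_le_iff]; constructor <;> nlinarith [h1.1, h1.2, h2.1, h2.2]
    have := le_ciSup hb (⟨y, hy⟩ : A)
    simp only [Real.norm_eq_abs] at this
    exact le_trans this (le_max_left _ _)
  have hN2 : ∀ y ∈ A, ∀ i, ‖(Dξ y - Dξ' y) (EuclideanSpace.single i (1:ℝ))‖ ≤ N := by
    intro y hy i
    have hbx : BddAbove (Set.range fun x : A =>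
        ‖fderivWithin ℝ (fun z => ξ z - ξ' z) A x.1 (EuclideanSpace.single i (1:ℝ))‖) := by
      refine ⟨2 * C₁, ?_⟩
      rintro _ ⟨x, rfl⟩
      calc ‖fderivWithin ℝ (fun z => ξ z - ξ' z) A x.1 (EuclideanSpace.single i (1:ℝ))‖
          ≤ ‖fderivWithin ℝ (fun z => ξ z - ξ' z) A x.1‖ * ‖(EuclideanSpace.single i (1:ℝ) : Euc d)‖ :=
            ContinuousLinearMap.le_opNorm _ _
        _ ≤ (C₁ + C₁) * 1 := by
            apply mul_le_mul _ _ (norm_nonneg _) (by positivity)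
            · rw [hsubD x.1 x.2]
              exact le_trans (norm_sub_le _ _)
                (add_le_add (hξ.2.2.1 x.1 x.2) (hξ'.2.2.1 x.1 x.2))
            · rw [EuclideanSpace.norm_single]; simp
        _ = 2 * C₁ := by ring
    have hb2 : BddAbove (Set.range fun j : Fin d => ⨆ x : A,
        ‖fderivWithin ℝ (fun z => ξ z - ξ' z) A x.1 (EuclideanSpace.single j (1:ℝ))‖) :=
      (Set.finite_range _).bddAbove
    have step1 : ‖fderivWithin ℝ (fun z => ξ z - ξ' z) A y (EuclideanSpace.single i (1:ℝ))‖
        ≤ ⨆ x : A, ‖fderivWithin ℝ (fun z => ξ z - ξ' z) A x.1 (EuclideanSpace.single i (1:ℝ))‖ :=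
      le_ciSup hbx (⟨y, hy⟩ : A)
    have step2 := le_ciSup hb2 i
    rw [← hsubD y hy]
    exact le_trans (le_trans step1 step2) (le_max_right _ _)
  -- norm bound on f'
  have hbound : ∀ y ∈ A, ‖f' y‖ ≤ (C₁ / B ^ 2 + Real.sqrt d / B) * N := by
    intro y hy
    have hξB : B ≤ ξ y := (hpos y hy).1
    have hξ'B : B ≤ ξ' y := (hpos' y hy).1
    have hne : ξ y ≠ 0 := ne_of_gt (lt_of_lt_of_le hB0 hξB)
    have hne' : ξ' y ≠ 0 := ne_of_gt (lt_of_lt_of_le hB0 hξ'B)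
    have hsplit : f' y = (ξ y)⁻¹ • (Dξ y - Dξ' y) + ((ξ y)⁻¹ - (ξ' y)⁻¹) • Dξ' y := by
      simp only [hf', smul_sub, sub_smul]; abel
    have hDD : ‖Dξ y - Dξ' y‖ ≤ Real.sqrt d * N :=
      opNorm_le_sqrt_card _ hN0 (hN2 y hy)
    have habs : |(ξ y)⁻¹ - (ξ' y)⁻¹| ≤ N / B ^ 2 := by
      rw [inv_sub_inv hne hne', abs_div]
      have hnum : |ξ' y - ξ y| ≤ N := by rw [abs_sub_comm]; exact hN1 y hy
      have hden : B ^ 2 ≤ |ξ y * ξ' y| := by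
        rw [abs_of_pos (mul_pos (lt_of_lt_of_le hB0 hξB) (lt_of_lt_of_le hB0 hξ'B)), pow_two]
        exact mul_le_mul hξB hξ'B hB0.le (le_trans hB0.le hξB)
      exact div_le_div₀ hN0 hnum (by positivity) hden
    have hinv : |(ξ y)⁻¹| ≤ B⁻¹ := by
      rw [abs_of_pos (inv_pos.mpr (lt_of_lt_of_le hB0 hξB))]
      exact inv_anti₀ hB0 hξB
    calc ‖f' y‖ ≤ ‖(ξ y)⁻¹ • (Dξ y - Dξ' y)‖ + ‖((ξ y)⁻¹ - (ξ' y)⁻¹) • Dξ' y‖ := by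
          rw [hsplit]; exact norm_add_le _ _
      _ = |(ξ y)⁻¹| * ‖Dξ y - Dξ' y‖ + |(ξ y)⁻¹ - (ξ' y)⁻¹| * ‖Dξ' y‖ := by
          rw [norm_smul, norm_smul]; simp [Real.norm_eq_abs, abs_inv]
      _ ≤ B⁻¹ * (Real.sqrt d * N) + (N / B ^ 2) * C₁ :=
          add_le_add
            (mul_le_mul hinv hDD (norm_nonneg _) (by positivity))
            (mul_le_mul habs (hξ'.2.2.1 y hy) (norm_nonneg _) (by positivity))
      _ = (C₁ / B ^ 2 + Real.sqrt d / B) * N := by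
          field_simp
          ring
  have := Convex.norm_image_sub_le_of_norm_hasFDerivWithin_le hderiv hbound
    (cube_convex d) hv hu
  simpa using this
/-- **Subgaussian increments of the empirical process.** Under the Chazottes–Gouëzel
concentration property, for `ξ, ξ' ∈ H^D` the increment
`W = (L̂^μ(ξ,n) − L^μ(ξ)) − (L̂^μ(ξ',n) − L^μ(ξ'))` is subgaussian with variance proxy
`(CL²/n)(C₁/B² + √d/B)²‖ξ−ξ'‖²_{C¹}`. -/
theorem statement10 {d k : ℕ} (hd : 0 < d) (hk : 2 ≤ k) {α B C₁ C₂ C L : ℝ}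
    (hα : α ∈ Set.Ioc (0:ℝ) 1) (hB : B ∈ Set.Ioo (0:ℝ) (1/2)) (hC₁ : 0 < C₁)
    (hC₂ : 0 < C₂) (hC : 0 < C) (hL : 0 < L)
    {Ω : Type*} [MeasurableSpace Ω] (P : Measure Ω) [IsProbabilityMeasure P]
    {M : Type*} [MetricSpace M] [MeasurableSpace M] [BorelSpace M]
    (T : M → M) (hT : Measurable T)
    (ν : Measure M) [IsProbabilityMeasure ν] (hinv : Measure.map T ν = ν)
    (g : M → Euc d) (hg : LipschitzWith (Real.toNNReal L) g)
    (hgcube : ∀ x, g x ∈ cube d)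
    (X : Ω → M) (hX : Measurable X) (hlaw : Measure.map X P = ν)
    -- Chazottes–Gouëzel concentration property
    (hCG : ∀ (m : ℕ) (K : (Fin m → M) → ℝ) (Lc : Fin m → ℝ),
      (∀ (x : Fin m → M) (i : Fin m) (a : M),
        |K (Function.update x i a) - K x| ≤ Lc i * dist a (x i)) →
      ∀ τ : ℝ,
        (∫ ω, Real.exp (τ * (K (fun i => T^[(i : ℕ)] (X ω)) -
            ∫ ω', K (fun i => T^[(i : ℕ)] (X ω')) ∂P)) ∂P) ≤
          Real.exp (τ ^ 2 * C * (∑ i, (Lc i) ^ 2) / 2))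
    (n : ℕ) (hn : 0 < n)
    (ξ ξ' : Euc d → ℝ) (hξ : memHD d k α B C₁ C₂ ξ) (hξ' : memHD d k α B C₁ C₂ ξ') :
    ∀ τ : ℝ,
      (∫ ω, Real.exp (τ *
          (((empLmu (fun i => g (T^[i] (X ω))) n ξ - Lmu (Measure.map g ν) ξ) -
            (empLmu (fun i => g (T^[i] (X ω))) n ξ' - Lmu (Measure.map g ν) ξ')) -
           ∫ ω', ((empLmu (fun i => g (T^[i] (X ω'))) n ξ - Lmu (Measure.map g ν) ξ) -
            (empLmu (fun i => g (T^[i] (X ω'))) n ξ' - Lmu (Measure.map g ν) ξ')) ∂P)) ∂P)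
        ≤
      Real.exp (τ ^ 2 *
        ((C * L ^ 2 / n) * (C₁ / B ^ 2 + Real.sqrt d / B) ^ 2 *
          (C1normOn (fun y => ξ y - ξ' y) (cube d)) ^ 2) / 2) := by

  intro τ
  have hB0 : (0:ℝ) < B := hB.1
  have hn0 : (n : ℝ) ≠ 0 := Nat.cast_ne_zero.mpr hn.ne'
  set N := C1normOn (fun y => ξ y - ξ' y) (cube d) with hN
  have hN0 : 0 ≤ N := by
    rw [hN]
    exact le_trans (Real.iSup_nonneg fun x => norm_nonneg _) (le_max_left _ _)
  set K₀ : ℝ := (C₁ / B ^ 2 + Real.sqrt d / B) * N with hK₀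
  have hK₀0 : 0 ≤ K₀ := by
    rw [hK₀]; apply mul_nonneg _ hN0; positivity
  have hlip := logdiff_lip hk hB hC₁ hξ hξ'
  set F : M → ℝ := fun u => Real.log (ξ (g u)) - Real.log (ξ' (g u)) with hF
  set K : (Fin n → M) → ℝ := fun x => (n:ℝ)⁻¹ * ∑ i, F (x i) with hK
  set Lc : Fin n → ℝ := fun _ => L * K₀ / n with hLc
  -- Lipschitz property of K
  have hKlip : ∀ (x : Fin n → M) (i : Fin n) (a : M),
      |K (Function.update x i a) - K x| ≤ Lc i * dist a (x i) := by
    intro x i a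
    have h1 : ∑ j, F (Function.update x i a j)
        = F a + ∑ j ∈ Finset.univ \ {i}, F (x j) := by
      have hupd : ∀ j, F (Function.update x i a j)
          = Function.update (fun j => F (x j)) i (F a) j := fun j =>
        Function.apply_update (fun _ u => F u) x i a j
      simp_rw [hupd]
      exact Finset.sum_update_of_mem (Finset.mem_univ i) _ _
    have h2 : ∑ j, F (x j) = (∑ j ∈ Finset.univ \ {i}, F (x j)) + F (x i) :=
      Finset.sum_eq_sum_sdiff_singleton_add (Finset.mem_univ i) _
    have hdiffsum : K (Function.update x i a) - K x = (n:ℝ)⁻¹ * (F a - F (x i)) := by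
      simp only [hK]; rw [h1, h2]; ring
    rw [hdiffsum, abs_mul]
    have hgdist : ‖g a - g (x i)‖ ≤ L * dist a (x i) := by
      have h := hg.dist_le_mul a (x i)
      rw [dist_eq_norm] at h
      rwa [Real.coe_toNNReal L hL.le] at h
    have hFa : |F a - F (x i)| ≤ K₀ * (L * dist a (x i)) := by
      have h := hlip (g a) (hgcube a) (g (x i)) (hgcube (x i))
      calc |F a - F (x i)| ≤ K₀ * ‖g a - g (x i)‖ := by
            simpa [hF, hK₀, hN, Real.norm_eq_abs] using h
        _ ≤ K₀ * (L * dist a (x i)) := mul_le_mul_of_nonneg_left hgdist hK₀0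
    calc |(n:ℝ)⁻¹| * |F a - F (x i)|
        ≤ (n:ℝ)⁻¹ * (K₀ * (L * dist a (x i))) := by
          rw [abs_of_nonneg (by positivity)]
          exact mul_le_mul_of_nonneg_left hFa (by positivity)
      _ = Lc i * dist a (x i) := by simp only [hLc]; ring
  -- continuity and boundedness of F
  have hlogB : Real.log B < 0 := Real.log_neg hB0 (by linarith [hB.2])
  have hcontmk : ∀ (ζ : Euc d → ℝ), memHD d k α B C₁ C₂ ζ →
      Continuous (fun u => Real.log (ζ (g u))) ∧
      ∀ u, |Real.log (ζ (g u))| ≤ |Real.log B| := by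
    intro ζ hζ
    have hζc : ContinuousOn ζ (cube d) := hζ.2.2.2.1.continuousOn
    have hcc : Continuous fun u => ζ (g u) := hζc.comp_continuous hg.continuous hgcube
    have hζB : ∀ u, B ≤ ζ (g u) ∧ ζ (g u) ≤ 1 - B := fun u => hζ.2.1 _ (hgcube u)
    constructor
    · apply Real.continuousOn_log.comp_continuous hcc
      intro u
      simp only [Set.mem_compl_iff, Set.mem_singleton_iff]
      exact ne_of_gt (lt_of_lt_of_le hB0 (hζB u).1)
    · intro u
      have h1 : Real.log B ≤ Real.log (ζ (g u)) :=
        Real.log_le_log hB0 (hζB u).1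
      have h2 : Real.log (ζ (g u)) ≤ 0 :=
        Real.log_nonpos (le_trans hB0.le (hζB u).1) (by linarith [(hζB u).2, hB0])
      rw [abs_of_neg hlogB, abs_of_nonpos h2]
      linarith
  obtain ⟨hc1, hb1⟩ := hcontmk ξ hξ
  obtain ⟨hc2, hb2⟩ := hcontmk ξ' hξ'
  have hFcont : Continuous F := hc1.sub hc2
  have hFbdd : ∀ u, ‖F u‖ ≤ 2 * |Real.log B| := by
    intro u
    rw [Real.norm_eq_abs, hF]
    calc |Real.log (ξ (g u)) - Real.log (ξ' (g u))|
        ≤ |Real.log (ξ (g u))| + |Real.log (ξ' (g u))| := abs_sub _ _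
      _ ≤ 2 * |Real.log B| := by linarith [hb1 u, hb2 u]
  -- integrability of K along the trajectory
  have hfint : Integrable (fun ω => K (fun i => T^[(i:ℕ)] (X ω))) P := by
    simp only [hK]
    apply Integrable.const_mul
    apply integrable_finset_sum
    intro i _
    have hmeas : Measurable fun ω => F (T^[(i:ℕ)] (X ω)) :=
      hFcont.measurable.comp ((hT.iterate (i:ℕ)).comp hX)
    exact (integrable_const (2 * |Real.log B|)).mono'
      hmeas.aestronglyMeasurable (ae_of_all _ fun ω => hFbdd _)
  -- identify the empirical difference with K
  have hemp : ∀ ω : Ω, empLmu (fun i => g (T^[i] (X ω))) n ξ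
      - empLmu (fun i => g (T^[i] (X ω))) n ξ' = K (fun i => T^[(i:ℕ)] (X ω)) := by
    intro ω
    simp only [empLmu, hK, hF]
    rw [← mul_sub, ← Finset.sum_sub_distrib, Finset.sum_range]
  set c : ℝ := Lmu (Measure.map g ν) ξ - Lmu (Measure.map g ν) ξ' with hc
  have hptwise : ∀ ω : Ω,
      ((empLmu (fun i => g (T^[i] (X ω))) n ξ - Lmu (Measure.map g ν) ξ) -
        (empLmu (fun i => g (T^[i] (X ω))) n ξ' - Lmu (Measure.map g ν) ξ'))
      = K (fun i => T^[(i:ℕ)] (X ω)) - c := by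
    intro ω
    rw [← hemp ω, hc]; ring
  have hint : (∫ ω', ((empLmu (fun i => g (T^[i] (X ω'))) n ξ - Lmu (Measure.map g ν) ξ) -
        (empLmu (fun i => g (T^[i] (X ω'))) n ξ' - Lmu (Measure.map g ν) ξ')) ∂P)
      = (∫ ω', K (fun i => T^[(i:ℕ)] (X ω')) ∂P) - c := by
    simp_rw [hptwise]
    rw [integral_sub hfint (integrable_const c), integral_const]
    simp [measure_univ]
  calc (∫ ω, Real.exp (τ *
          (((empLmu (fun i => g (T^[i] (X ω))) n ξ - Lmu (Measure.map g ν) ξ) -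
            (empLmu (fun i => g (T^[i] (X ω))) n ξ' - Lmu (Measure.map g ν) ξ')) -
           ∫ ω', ((empLmu (fun i => g (T^[i] (X ω'))) n ξ - Lmu (Measure.map g ν) ξ) -
            (empLmu (fun i => g (T^[i] (X ω'))) n ξ' - Lmu (Measure.map g ν) ξ')) ∂P)) ∂P)
      = ∫ ω, Real.exp (τ * (K (fun i => T^[(i:ℕ)] (X ω)) -
          ∫ ω', K (fun i => T^[(i:ℕ)] (X ω')) ∂P)) ∂P := by
        apply integral_congr_ae
        filter_upwards with ω
        rw [hptwise ω, hint]
        congr 1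
        ring
    _ ≤ Real.exp (τ ^ 2 * C * (∑ i, (Lc i) ^ 2) / 2) := hCG n K Lc hKlip τ
    _ = Real.exp (τ ^ 2 *
        ((C * L ^ 2 / n) * (C₁ / B ^ 2 + Real.sqrt d / B) ^ 2 *
          (C1normOn (fun y => ξ y - ξ' y) (cube d)) ^ 2) / 2) := by
        congr 1
        rw [show (∑ i : Fin n, (Lc i) ^ 2) = n * (L * K₀ / n) ^ 2 by
          simp [hLc, Finset.sum_const, Finset.card_univ, nsmul_eq_mul]]
        rw [hK₀, ← hN]
        field_simp
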